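/- arXiv:2311.02792 — 3 statements merged into one kernel-verified Lean document; each statement's English description precedes it below -/
import Mathlib

section
/- Let N be an incidence matrix of a connected signed graph Γ on n vertices. Then rank(N) = n−1 if Γ is balanced, and rank(N) = n if Γ is unbalanced. -/
open Matrix BigOperators

/-- A signed graph together with an enumeration of its edges. -/
structure SignedIncidence (n m : ℕ) where
  G : SimpleGraph (Fin n)
  sigma : Fin n → Fin n → ℤ
  sigma_symm : ∀ i j, sigma i j = sigma j i
  sigma_sign : ∀ i j, G.Adj i j → sigma i j = 1 ∨ sigma i j = -1
  ends : Fin m → Fin n × Fin n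
  ends_adj : ∀ ℓ, G.Adj (ends ℓ).1 (ends ℓ).2
  ends_inj : Function.Injective fun ℓ => Sym2.mk.uncurry (ends ℓ)
  ends_surj : ∀ e ∈ G.edgeSet, ∃ ℓ, Sym2.mk.uncurry (ends ℓ) = e

namespace SignedIncidence

variable {n m : ℕ}

def edge (S : SignedIncidence n m) (ℓ : Fin m) : Sym2 (Fin n) := Sym2.mk.uncurry (S.ends ℓ)

/-- `N` is an incidence matrix of the signed graph `S`. -/
def IsIncidence (S : SignedIncidence n m) (N : Matrix (Fin n) (Fin m) ℝ) : Prop :=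
  ∀ ℓ : Fin m,
    N (S.ends ℓ).1 ℓ * N (S.ends ℓ).2 ℓ = -((S.sigma (S.ends ℓ).1 (S.ends ℓ).2 : ℤ) : ℝ) ∧
    (N (S.ends ℓ).1 ℓ = 1 ∨ N (S.ends ℓ).1 ℓ = -1) ∧
    (N (S.ends ℓ).2 ℓ = 1 ∨ N (S.ends ℓ).2 ℓ = -1) ∧
    ∀ k, k ≠ (S.ends ℓ).1 → k ≠ (S.ends ℓ).2 → N k ℓ = 0

/-- The sign of a walk (in the graph or any subgraph): product of edge signs. -/
def walkSign (S : SignedIncidence n m) {G' : SimpleGraph (Fin n)} {i j : Fin n}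
    (w : G'.Walk i j) : ℤ :=
  (w.darts.map fun d => S.sigma d.toProd.1 d.toProd.2).prod

/-- A signed graph is balanced if every closed walk has sign `+1`. -/
def Balanced (S : SignedIncidence n m) : Prop :=
  ∀ (i : Fin n) (w : S.G.Walk i i), S.walkSign w = 1

end SignedIncidence
namespace SignedIncidence

variable {n m : ℕ}

lemma walkSign_nil (S : SignedIncidence n m) {G' : SimpleGraph (Fin n)} {i : Fin n} :
    S.walkSign (SimpleGraph.Walk.nil : G'.Walk i i) = 1 := rfl

lemma walkSign_cons (S : SignedIncidence n m) {G' : SimpleGraph (Fin n)} {i j k : Fin n}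
    (h : G'.Adj i j) (p : G'.Walk j k) :
    S.walkSign (SimpleGraph.Walk.cons h p) = S.sigma i j * S.walkSign p := by
  simp [walkSign]

lemma walkSign_append (S : SignedIncidence n m) {G' : SimpleGraph (Fin n)} {i j k : Fin n}
    (p : G'.Walk i j) (q : G'.Walk j k) :
    S.walkSign (p.append q) = S.walkSign p * S.walkSign q := by
  simp [walkSign, SimpleGraph.Walk.darts_append]

lemma walkSign_reverse (S : SignedIncidence n m) {G' : SimpleGraph (Fin n)} {i j : Fin n}
    (p : G'.Walk i j) : S.walkSign p.reverse = S.walkSign p := by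
  simp only [walkSign, SimpleGraph.Walk.darts_reverse, List.map_reverse, List.map_map,
    List.prod_reverse]
  congr 1
  apply List.map_congr_left
  intro d _
  simp only [Function.comp_apply]
  have : d.symm.toProd = d.toProd.swap := rfl
  rw [this]
  exact S.sigma_symm _ _

lemma walkSign_pm (S : SignedIncidence n m) {i j : Fin n} (w : S.G.Walk i j) :
    S.walkSign w = 1 ∨ S.walkSign w = -1 := by
  induction w with
  | nil => left; rfl
  | cons h p ih =>
    rw [S.walkSign_cons]
    rcases S.sigma_sign _ _ h with h1 | h1 <;> rcases ih with h2 | h2 <;>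
      rw [h1, h2] <;> simp

/-- Compatibility of a vector with the signs. -/
def Compat (S : SignedIncidence n m) (x : Fin n → ℝ) : Prop :=
  ∀ i j, S.G.Adj i j → x j = (S.sigma i j : ℝ) * x i

lemma compat_walk (S : SignedIncidence n m) {x : Fin n → ℝ} (hx : S.Compat x)
    {i j : Fin n} (w : S.G.Walk i j) : x j = (S.walkSign w : ℝ) * x i := by
  induction w with
  | nil => simp [walkSign_nil]
  | cons h p ih =>
    rw [ih, S.walkSign_cons]
    push_cast
    rw [hx _ _ h]
    ring

end SignedIncidence

namespace SignedIncidence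

variable {n m : ℕ}

lemma mem_ker_iff_compat (S : SignedIncidence n m) (N : Matrix (Fin n) (Fin m) ℝ)
    (hN : S.IsIncidence N) (x : Fin n → ℝ) :
    x ∈ LinearMap.ker Nᵀ.mulVecLin ↔ S.Compat x := by
  have key : ∀ ℓ : Fin m, (Nᵀ *ᵥ x) ℓ =
      N (S.ends ℓ).1 ℓ * x (S.ends ℓ).1 + N (S.ends ℓ).2 ℓ * x (S.ends ℓ).2 := by
    intro ℓ
    have hne : (S.ends ℓ).1 ≠ (S.ends ℓ).2 := (S.ends_adj ℓ).ne
    have := Fintype.sum_eq_add (f := fun i => N i ℓ * x i) (S.ends ℓ).1 (S.ends ℓ).2 hne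
      (fun k hk => by show N k ℓ * x k = 0; rw [(hN ℓ).2.2.2 k hk.1 hk.2, zero_mul])
    simpa [Matrix.mulVec, dotProduct, Matrix.transpose_apply] using this
  constructor
  · intro hx i j hij
    rw [LinearMap.mem_ker] at hx
    obtain ⟨ℓ, hℓ⟩ := S.ends_surj s(i, j) hij
    have h0 : (Nᵀ *ᵥ x) ℓ = 0 := congrFun hx ℓ
    rw [key ℓ] at h0
    obtain ⟨hprod, ha, hb, -⟩ := hN ℓ
    change s((S.ends ℓ).1, (S.ends ℓ).2) = s(((i, j) : Fin n × Fin n).1, ((i, j) : Fin n × Fin n).2) at hℓ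
    rw [Sym2.mk_eq_mk_iff] at hℓ
    have hsig : (S.sigma i j : ℝ) = (S.sigma j i : ℝ) := by rw [S.sigma_symm]
    rcases hℓ with hℓ | hℓ
    · have h1 : (S.ends ℓ).1 = i := by rw [hℓ]
      have h2 : (S.ends ℓ).2 = j := by rw [hℓ]
      rw [h1] at h0 hprod ha
      rw [h2] at h0 hprod hb
      have hs2 : (S.sigma i j : ℝ) = 1 ∨ (S.sigma i j : ℝ) = -1 := by
        rcases S.sigma_sign i j hij with h | h <;> rw [h] <;> simp
      rcases hb with hb | hb <;> rcases ha with ha | ha <;>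
        rw [ha, hb] at hprod h0 <;> rcases hs2 with hs | hs <;> rw [hs] at hprod ⊢ <;>
        first
          | (norm_num at hprod; linarith)
          | norm_num at hprod
    · have h1 : (S.ends ℓ).1 = j := by rw [hℓ]; rfl
      have h2 : (S.ends ℓ).2 = i := by rw [hℓ]; rfl
      rw [h1] at h0 hprod ha
      rw [h2] at h0 hprod hb
      rw [hsig]
      have hs2 : (S.sigma j i : ℝ) = 1 ∨ (S.sigma j i : ℝ) = -1 := by
        rcases S.sigma_sign j i hij.symm with h | h <;> rw [h] <;> simp
      rcases hb with hb | hb <;> rcases ha with ha | ha <;>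
        rw [ha, hb] at hprod h0 <;> rcases hs2 with hs | hs <;> rw [hs] at hprod ⊢ <;>
        first
          | (norm_num at hprod; linarith)
          | norm_num at hprod
  · intro hx
    rw [LinearMap.mem_ker]
    funext ℓ
    show (Nᵀ *ᵥ x) ℓ = (0 : ℝ)
    rw [key ℓ]
    obtain ⟨hprod, ha, hb, -⟩ := hN ℓ
    have hcomp := hx _ _ (S.ends_adj ℓ)
    rw [hcomp]
    have hs2 : ((S.sigma (S.ends ℓ).1 (S.ends ℓ).2 : ℤ) : ℝ) = 1 ∨
        ((S.sigma (S.ends ℓ).1 (S.ends ℓ).2 : ℤ) : ℝ) = -1 := by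
      rcases S.sigma_sign _ _ (S.ends_adj ℓ) with h | h <;> rw [h] <;> simp
    rcases ha with ha | ha <;> rcases hb with hb | hb <;> rcases hs2 with hs | hs <;>
      rw [ha, hb, hs] at hprod ⊢ <;>
      first
        | (norm_num at hprod; linarith)
        | norm_num at hprod

end SignedIncidence

theorem incidence_rank {n m : ℕ} (S : SignedIncidence n m) (hconn : S.G.Connected)
    (N : Matrix (Fin n) (Fin m) ℝ) (hN : S.IsIncidence N) :
    (S.Balanced → N.rank = n - 1) ∧ (¬ S.Balanced → N.rank = n) := by
  have hnonempty : Nonempty (Fin n) := hconn.nonempty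
  obtain ⟨v0⟩ := hnonempty
  have hrank : N.rank + Module.finrank ℝ (LinearMap.ker Nᵀ.mulVecLin) = n := by
    rw [← Matrix.rank_transpose N, Matrix.rank]
    rw [LinearMap.finrank_range_add_finrank_ker Nᵀ.mulVecLin]
    simp
  -- choose walks
  have hwalk : ∀ i, Nonempty (S.G.Walk v0 i) := fun i => (hconn v0 i)
  constructor
  · -- balanced case
    intro hbal
    set x : Fin n → ℝ := fun i => ((S.walkSign (hwalk i).some : ℤ) : ℝ) with hxdef
    have hwd : ∀ (i : Fin n) (w : S.G.Walk v0 i), (S.walkSign w : ℝ) = x i := by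
      intro i w
      show (S.walkSign w : ℝ) = ((S.walkSign (hwalk i).some : ℤ) : ℝ)
      have h1 : S.walkSign w * S.walkSign (hwalk i).some = 1 := by
        have h2 := hbal v0 (w.append (hwalk i).some.reverse)
        rwa [S.walkSign_append, S.walkSign_reverse] at h2
      rcases S.walkSign_pm w with h | h <;> rcases S.walkSign_pm (hwalk i).some with h' | h' <;>
        rw [h, h'] at h1 ⊢ <;> norm_num at h1
    have hcompat : S.Compat x := by
      intro i j hij
      have hw : (S.walkSign ((hwalk i).some.append (SimpleGraph.Walk.cons hij SimpleGraph.Walk.nil)) : ℝ) = x j :=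
        hwd j _
      rw [S.walkSign_append, S.walkSign_cons, S.walkSign_nil] at hw
      push_cast at hw
      rw [← hw, ← hwd i (hwalk i).some]
      ring
    have hker : LinearMap.ker Nᵀ.mulVecLin = Submodule.span ℝ {x} := by
      apply le_antisymm
      · intro y hy
        rw [S.mem_ker_iff_compat N hN] at hy
        have : y = y v0 • x := by
          funext i
          have := S.compat_walk hy (hwalk i).some
          rw [this, hwd i (hwalk i).some]
          simp [mul_comm]
        rw [this]
        exact Submodule.smul_mem _ _ (Submodule.mem_span_singleton_self x)
      · rw [Submodule.span_singleton_le_iff_mem]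
        rw [S.mem_ker_iff_compat N hN]
        exact hcompat
    have hx0 : x ≠ 0 := by
      intro h
      have hv0 : ((S.walkSign (hwalk v0).some : ℤ) : ℝ) = 0 := congrFun h v0
      rw [hbal v0 _] at hv0
      norm_num at hv0
    have : Module.finrank ℝ (LinearMap.ker Nᵀ.mulVecLin) = 1 := by
      rw [hker, finrank_span_singleton hx0]
    omega
  · -- unbalanced case
    intro hbal
    have hker : LinearMap.ker Nᵀ.mulVecLin = ⊥ := by
      rw [Submodule.eq_bot_iff]
      intro y hy
      rw [S.mem_ker_iff_compat N hN] at hy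
      rw [SignedIncidence.Balanced] at hbal
      push_neg at hbal
      obtain ⟨i0, w, hw⟩ := hbal
      have hneg : S.walkSign w = -1 := (S.walkSign_pm w).resolve_left hw
      have h1 := S.compat_walk hy w
      rw [hneg] at h1
      have hy0 : y i0 = 0 := by push_cast at h1; linarith
      funext j
      have h2 := S.compat_walk hy ((hconn i0 j).some)
      rw [hy0, mul_zero] at h2
      simpa using h2
    have : Module.finrank ℝ (LinearMap.ker Nᵀ.mulVecLin) = 0 := by
      rw [hker]; simp
    omega
end

section
/- Let N be an incidence matrix of an unbalanced unicyclic signed graph Γ on n vertices (so N is n×n square). Then det(N) = ±2. -/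
open Matrix BigOperators

section Aux

variable {n m : ℕ}

lemma SignedIncidence.walkSign_nil_s2 (S : SignedIncidence n m) {G' : SimpleGraph (Fin n)}
    {x : Fin n} : S.walkSign (SimpleGraph.Walk.nil : G'.Walk x x) = 1 := by
  simp [SignedIncidence.walkSign]

lemma SignedIncidence.walkSign_cons_s2 (S : SignedIncidence n m) {G' : SimpleGraph (Fin n)}
    {x v y : Fin n} (h : G'.Adj x v) (p : G'.Walk v y) :
    S.walkSign (SimpleGraph.Walk.cons h p) = S.sigma x v * S.walkSign p := by
  simp [SignedIncidence.walkSign, SimpleGraph.Walk.darts_cons]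

lemma SignedIncidence.walkSign_pm_s2 (S : SignedIncidence n m) {x y : Fin n}
    (w : S.G.Walk x y) : S.walkSign w = 1 ∨ S.walkSign w = -1 := by
  induction w with
  | nil => left; exact S.walkSign_nil_s2
  | cons h p ih =>
      rw [S.walkSign_cons_s2 h p]
      rcases S.sigma_sign _ _ h with h1 | h1 <;> rcases ih with h2 | h2 <;>
        rw [h1, h2] <;> norm_num

private lemma int_pm_cast_zmod2 {a : ℤ} (h : a = 1 ∨ a = -1) : ((a : ℤ) : ZMod 2) = 1 := by
  rcases h with h | h <;> subst h <;> decide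

end Aux

theorem unbalanced_unicyclic_incidence_det {n : ℕ} (S : SignedIncidence n n)
    (hconn : S.G.Connected) (hunb : ¬ S.Balanced)
    (N : Matrix (Fin n) (Fin n) ℝ) (hN : S.IsIncidence N) :
    N.det = 2 ∨ N.det = -2 := by
  classical
  -- the integer version of `N`
  set M : Matrix (Fin n) (Fin n) ℤ :=
    fun i j => if N i j = 1 then 1 else if N i j = -1 then -1 else 0 with hMdef
  have hval : ∀ i j, N i j = 1 ∨ N i j = -1 ∨ N i j = 0 := by
    intro i j
    obtain ⟨hp, h1, h2, h0⟩ := hN j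
    by_cases hi1 : i = (S.ends j).1
    · subst hi1; tauto
    · by_cases hi2 : i = (S.ends j).2
      · subst hi2; tauto
      · exact Or.inr (Or.inr (h0 i hi1 hi2))
  have hcast : ∀ i j, ((M i j : ℤ) : ℝ) = N i j := by
    intro i j
    rcases hval i j with h | h | h <;> simp [hMdef, h] <;> norm_num
  have hdetNM : N.det = ((M.det : ℤ) : ℝ) := by
    have hNM : N = M.map (Int.cast : ℤ → ℝ) := by
      ext i j; exact (hcast i j).symm
    rw [hNM]
    exact (RingHom.map_det (Int.castRingHom ℝ) M).symm
  -- properties of M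
  have hM1 : ∀ ℓ, M (S.ends ℓ).1 ℓ = 1 ∨ M (S.ends ℓ).1 ℓ = -1 := by
    intro ℓ
    rcases (hN ℓ).2.1 with h | h <;> simp [hMdef, h] <;> norm_num
  have hM2 : ∀ ℓ, M (S.ends ℓ).2 ℓ = 1 ∨ M (S.ends ℓ).2 ℓ = -1 := by
    intro ℓ
    rcases (hN ℓ).2.2.1 with h | h <;> simp [hMdef, h] <;> norm_num
  have hM0 : ∀ ℓ k, k ≠ (S.ends ℓ).1 → k ≠ (S.ends ℓ).2 → M k ℓ = 0 := by
    intro ℓ k h1 h2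
    have := (hN ℓ).2.2.2 k h1 h2
    simp [hMdef, this]
  have hMprod : ∀ ℓ, M (S.ends ℓ).1 ℓ * M (S.ends ℓ).2 ℓ
      = -(S.sigma (S.ends ℓ).1 (S.ends ℓ).2) := by
    intro ℓ
    have hp := (hN ℓ).1
    have : ((M (S.ends ℓ).1 ℓ * M (S.ends ℓ).2 ℓ : ℤ) : ℝ)
        = ((-(S.sigma (S.ends ℓ).1 (S.ends ℓ).2) : ℤ) : ℝ) := by
      push_cast
      rw [hcast, hcast, hp]
    exact_mod_cast this
  -- the unbalanced closed walk
  rw [SignedIncidence.Balanced] at hunb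
  push_neg at hunb
  obtain ⟨u, w, hw⟩ := hunb
  have hwsign : S.walkSign w = -1 := (S.walkSign_pm_s2 w).resolve_left hw
  ---- Part 1 : 2 ∣ M.det
  haveI : Fact (Nat.Prime 2) := ⟨Nat.prime_two⟩
  have hdvd1 : (2 : ℤ) ∣ M.det := by
    have hker : (M.map (Int.cast : ℤ → ZMod 2)).det = 0 := by
      rw [← Matrix.exists_vecMul_eq_zero_iff]
      refine ⟨1, fun h => ?_, ?_⟩
      · have := congrFun h u
        simp [Pi.one_apply] at this
      · funext ℓ
        simp only [Pi.zero_apply]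
        have hpq : (S.ends ℓ).1 ≠ (S.ends ℓ).2 := (S.ends_adj ℓ).ne
        have hsum : ∀ i, i ∉ ({(S.ends ℓ).1, (S.ends ℓ).2} : Finset (Fin n)) →
            ((M i ℓ : ℤ) : ZMod 2) = 0 := by
          intro i hi
          simp only [Finset.mem_insert, Finset.mem_singleton, not_or] at hi
          rw [hM0 ℓ i hi.1 hi.2]; simp
        have : (1 ᵥ* (M.map fun x => ((x : ℤ) : ZMod 2))) ℓ
            = ∑ i, ((M i ℓ : ℤ) : ZMod 2) := by
          simp [Matrix.vecMul, dotProduct, Matrix.map_apply]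
        rw [this, ← Finset.sum_subset (Finset.subset_univ {(S.ends ℓ).1, (S.ends ℓ).2})
          (fun i _ hi => hsum i hi), Finset.sum_pair hpq]
        rw [int_pm_cast_zmod2 (hM1 ℓ), int_pm_cast_zmod2 (hM2 ℓ)]
        rfl
    have h0 : ((M.det : ℤ) : ZMod 2) = 0 := by
      rw [show ((M.det : ℤ) : ZMod 2) = (M.map (Int.cast : ℤ → ZMod 2)).det from
        RingHom.map_det (Int.castRingHom (ZMod 2)) M]
      exact hker
    exact_mod_cast (ZMod.intCast_zmod_eq_zero_iff_dvd M.det 2).mp h0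
  ---- Part 2 : M.det ∣ 2
  set L : Submodule ℤ (Fin n → ℤ) :=
    Submodule.span ℤ (Set.range fun ℓ => fun k => M k ℓ) with hLdef
  have hcol : ∀ ℓ, (fun k => M k ℓ) ∈ L := fun ℓ => Submodule.subset_span ⟨ℓ, rfl⟩
  -- each "edge vector" is in the column span
  have hedge : ∀ x y, S.G.Adj x y →
      (fun k => (if k = x then (1 : ℤ) else 0) - S.sigma x y * (if k = y then 1 else 0)) ∈ L := by
    intro x y hxy
    obtain ⟨ℓ, hℓ⟩ := S.ends_surj s(x, y) (S.G.mem_edgeSet.mpr hxy)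
    have hxyne : x ≠ y := hxy.ne
    rcases Sym2.eq_iff.mp (show s((S.ends ℓ).1, (S.ends ℓ).2) = s(x, y) from hℓ) with ⟨h1, h2⟩ | ⟨h1, h2⟩
    · -- ends ℓ = (x, y)
      have ha : M x ℓ = 1 ∨ M x ℓ = -1 := by rw [← h1]; exact hM1 ℓ
      have hprod : M x ℓ * M y ℓ = -(S.sigma x y) := by
        have := hMprod ℓ; rwa [h1, h2] at this
      have key : (fun k => (if k = x then (1 : ℤ) else 0)
          - S.sigma x y * (if k = y then 1 else 0)) = M x ℓ • fun k => M k ℓ := by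
        funext k
        simp only [Pi.smul_apply, smul_eq_mul]
        by_cases hkx : k = x
        · subst hkx
          rcases ha with h | h <;> simp [h, hxyne]
        · by_cases hky : k = y
          · subst hky
            rw [hprod]; simp [hkx, Ne.symm hxyne]
          · rw [hM0 ℓ k (h1 ▸ hkx) (h2 ▸ hky)]
            simp [hkx, hky]
      rw [key]; exact L.smul_mem _ (hcol ℓ)
    · -- ends ℓ = (y, x)
      have ha : M x ℓ = 1 ∨ M x ℓ = -1 := by rw [← h2]; exact hM2 ℓ
      have hprod : M y ℓ * M x ℓ = -(S.sigma x y) := by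
        have := hMprod ℓ; rw [h1, h2] at this; rwa [S.sigma_symm y x] at this
      have key : (fun k => (if k = x then (1 : ℤ) else 0)
          - S.sigma x y * (if k = y then 1 else 0)) = M x ℓ • fun k => M k ℓ := by
        funext k
        simp only [Pi.smul_apply, smul_eq_mul]
        by_cases hkx : k = x
        · subst hkx
          rcases ha with h | h <;> simp [h, hxyne]
        · by_cases hky : k = y
          · have hprod' : M x ℓ * M y ℓ = -(S.sigma x y) := by
              rw [mul_comm]; exact hprod
            subst hky
            rw [hprod']; simp [hkx, Ne.symm hxyne]
          · rw [hM0 ℓ k (h1 ▸ hky) (h2 ▸ hkx)]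
            simp [hkx, hky]
      rw [key]; exact L.smul_mem _ (hcol ℓ)
  -- telescoping along walks
  have hwalk : ∀ (x y : Fin n) (p : S.G.Walk x y),
      (fun k => (if k = x then (1 : ℤ) else 0)
        - S.walkSign p * (if k = y then 1 else 0)) ∈ L := by
    intro x y p
    induction p with
    | nil =>
        have h0 : ∀ a : Fin n, (fun k => (if k = a then (1 : ℤ) else 0)
            - S.walkSign (SimpleGraph.Walk.nil : S.G.Walk a a) * (if k = a then 1 else 0))
            = 0 := by
          intro a; funext k; simp [SignedIncidence.walkSign_nil_s2]
        rw [h0]; exact L.zero_mem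
    | @cons a b c h p ih =>
        have hmem := L.add_mem (hedge a b h) (L.smul_mem (S.sigma a b) ih)
        have key : (fun k => (if k = a then (1 : ℤ) else 0)
            - S.walkSign (SimpleGraph.Walk.cons h p) * (if k = c then 1 else 0))
            = (fun k => (if k = a then (1 : ℤ) else 0) - S.sigma a b * (if k = b then 1 else 0))
              + S.sigma a b • fun k =>
                (if k = b then (1 : ℤ) else 0) - S.walkSign p * (if k = c then 1 else 0) := by
          funext k
          rw [S.walkSign_cons_s2 h p]
          simp only [Pi.add_apply, Pi.smul_apply, smul_eq_mul]
          ring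
        rw [key]; exact hmem
  -- 2 e_u ∈ L
  have h2u : (fun k => if k = u then (2 : ℤ) else 0) ∈ L := by
    have hm := hwalk u u w
    rw [hwsign] at hm
    have : (fun k => if k = u then (2 : ℤ) else 0)
        = fun k => (if k = u then (1 : ℤ) else 0) - (-1) * (if k = u then 1 else 0) := by
      funext k; by_cases h : k = u <;> simp [h]
    rw [this]; exact hm
  -- choose signs along walks to u
  have hsv : ∀ v : Fin n, ∃ t : ℤ,
      (fun k => (if k = v then (1 : ℤ) else 0) - t * (if k = u then 1 else 0)) ∈ L := by
    intro v
    obtain ⟨p⟩ := hconn.preconnected v u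
    exact ⟨S.walkSign p, hwalk v u p⟩
  choose t ht using hsv
  -- the auxiliary matrix B
  set B : Matrix (Fin n) (Fin n) ℤ := fun x v =>
    if v = u then (if x = u then 2 else 0)
    else (if x = v then 1 else 0) - t v * (if x = u then 1 else 0) with hBdef
  have hBcol : ∀ v, (fun x => B x v) ∈ L := by
    intro v
    by_cases hv : v = u
    · have : (fun x => B x v) = fun k => if k = u then (2 : ℤ) else 0 := by
        funext x; simp [hBdef, hv]
      rw [this]; exact h2u
    · have : (fun x => B x v)
          = fun k => (if k = v then (1 : ℤ) else 0) - t v * (if k = u then 1 else 0) := by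
        funext x; simp [hBdef, hv]
      rw [this]; exact ht v
  have hBdet : B.det = 2 := by
    have hB1 : B = 1 + Matrix.replicateCol (Fin 1) (fun x => if x = u then (1 : ℤ) else 0) *
        Matrix.replicateRow (Fin 1) (fun v => if v = u then (1 : ℤ) else - t v) := by
      ext x v
      simp only [Matrix.add_apply, Matrix.mul_apply, Matrix.replicateCol_apply, Matrix.replicateRow_apply,
        Finset.sum_const, Finset.card_univ, Fintype.card_fin, one_smul, Matrix.one_apply, hBdef]
      by_cases hv : v = u <;> by_cases hx : x = u
      · simp [hv, hx]
      · simp [hv, hx]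
      · simp [hv, hx]
        ring
      · simp [hv, hx]
    rw [hB1]; erw [Matrix.det_one_add_replicateCol_mul_replicateRow (ι := Fin 1)]
    simp [dotProduct]
  -- B = M * A for an integer matrix A
  have hA : ∀ v, ∃ c : Fin n → ℤ, ∑ ℓ, c ℓ • (fun k => M k ℓ) = fun x => B x v := by
    intro v
    exact (Submodule.mem_span_range_iff_exists_fun ℤ).mp (hBcol v)
  choose c hc using hA
  have hMA : M * (Matrix.of fun ℓ v => c v ℓ) = B := by
    ext x v
    have hcc := congrFun (hc v) x
    simp only [Finset.sum_apply, Pi.smul_apply, smul_eq_mul] at hcc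
    rw [Matrix.mul_apply]
    rw [← hcc]
    exact Finset.sum_congr rfl fun ℓ _ => mul_comm _ _
  have hdvd2 : M.det ∣ 2 := by
    refine ⟨(Matrix.of fun ℓ v => c v ℓ).det, ?_⟩
    rw [← Matrix.det_mul, hMA, hBdet]
  -- combine
  have habs : M.det.natAbs = 2 := by
    have d1 : M.det.natAbs ∣ 2 := by
      have := Int.natAbs_dvd_natAbs.mpr hdvd2
      simpa using this
    have d2 : 2 ∣ M.det.natAbs := by
      have := Int.natAbs_dvd_natAbs.mpr hdvd1
      simpa using this
    exact Nat.dvd_antisymm d1 d2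
  have : M.det = 2 ∨ M.det = -2 := by
    have := Int.natAbs_eq_iff.mp habs
    exact_mod_cast this
  rcases this with h | h <;> rw [hdetNM, h]
  · left; norm_num
  · right; norm_num
end

section
/- Let A be an n×m real matrix of rank r > 0. Then A† = (1/vol²A) Σ vol²A(i₁,…,i_r)·A(i₁,…,i_r)†, where the sum runs over all r-subsets of columns {i₁<…<i_r} for which the matrix A(i₁,…,i_r) (equal to A with all other columns replaced by zero columns) has rank r, and vol²B denotes the sum of squares of all r×r minors of B. -/
open Matrix Finset BigOperators

section CauchyBinet

variable {r q : ℕ}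

private lemma cb_aux {M : Matrix (Fin r) (Fin q) ℝ} {N : Matrix (Fin q) (Fin r) ℝ}
    {p : Fin r → Fin q} (H : ¬Function.Injective p) :
    (∑ σ : Equiv.Perm (Fin r), ((Equiv.Perm.sign σ : ℤ) : ℝ) * ∏ x, M (σ x) (p x) * N (p x) x)
      = 0 := by
  obtain ⟨i, j, hpij, hij⟩ : ∃ i j, p i = p j ∧ i ≠ j := by
    rw [Function.Injective] at H; push_neg at H
    obtain ⟨i, j, h1, h2⟩ := H; exact ⟨i, j, h1, h2⟩
  exact Finset.sum_involution (fun σ _ => σ * Equiv.swap i j)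
    (fun σ _ => by
      have : (∏ x, M (σ x) (p x)) = ∏ x, M ((σ * Equiv.swap i j) x) (p x) :=
        Fintype.prod_equiv (Equiv.swap i j) _ _ (by
          simp [Equiv.apply_swap_eq_self hpij])
      simp [this, Equiv.Perm.sign_swap hij, prod_mul_distrib])
    (fun σ _ _ => (not_congr Equiv.mul_swap_eq_iff).mpr hij) (fun _ _ => mem_univ _)
    fun σ _ => Equiv.mul_swap_involutive i j σ

private lemma sum_perm_det (M N : Matrix (Fin r) (Fin r) ℝ) :
    ∑ τ : Equiv.Perm (Fin r), ∑ σ : Equiv.Perm (Fin r),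
      ((Equiv.Perm.sign σ : ℤ) : ℝ) * ∏ i, M (σ i) (τ i) * N (τ i) i = M.det * N.det := by
  rw [← Matrix.det_mul]
  symm
  calc
    (M * N).det = ∑ p : Fin r → Fin r, ∑ σ : Equiv.Perm (Fin r),
        ((Equiv.Perm.sign σ : ℤ) : ℝ) * ∏ i, M (σ i) (p i) * N (p i) i := by
      simp only [det_apply', mul_apply, prod_univ_sum, mul_sum, Fintype.piFinset_univ]
      rw [Finset.sum_comm]
    _ = ∑ p ∈ (univ : Finset (Fin r → Fin r)).filter Function.Bijective,
        ∑ σ : Equiv.Perm (Fin r),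
        ((Equiv.Perm.sign σ : ℤ) : ℝ) * ∏ i, M (σ i) (p i) * N (p i) i := by
      refine (sum_subset (filter_subset _ _) fun f _ hbij ↦ Matrix.det_mul_aux ?_).symm
      simpa only [true_and, mem_filter, mem_univ] using hbij
    _ = ∑ τ : Equiv.Perm (Fin r), ∑ σ : Equiv.Perm (Fin r),
        ((Equiv.Perm.sign σ : ℤ) : ℝ) * ∏ i, M (σ i) (τ i) * N (τ i) i :=
      sum_bij (fun p h ↦ Equiv.ofBijective p (mem_filter.1 h).2) (fun _ _ ↦ mem_univ _)
        (fun _ _ _ _ h ↦ by injection h)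
        (fun b _ ↦ ⟨b, mem_filter.2 ⟨mem_univ _, b.bijective⟩, Equiv.coe_fn_injective rfl⟩)
        fun _ _ ↦ rfl

/-- Cauchy–Binet, indexed by strictly monotone column selections. -/
theorem cauchy_binet (L : Matrix (Fin r) (Fin q) ℝ) (W : Matrix (Fin q) (Fin r) ℝ) :
    (L * W).det = ∑ g ∈ (univ : Finset (Fin r → Fin q)).filter StrictMono,
      (L.submatrix id g).det * (W.submatrix g id).det := by
  calc
    (L * W).det = ∑ p : Fin r → Fin q, ∑ σ : Equiv.Perm (Fin r),
        ((Equiv.Perm.sign σ : ℤ) : ℝ) * ∏ i, L (σ i) (p i) * W (p i) i := by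
      simp only [det_apply', mul_apply, prod_univ_sum, mul_sum, Fintype.piFinset_univ]
      rw [Finset.sum_comm]
    _ = ∑ p ∈ (univ : Finset (Fin r → Fin q)).filter Function.Injective,
        ∑ σ : Equiv.Perm (Fin r),
        ((Equiv.Perm.sign σ : ℤ) : ℝ) * ∏ i, L (σ i) (p i) * W (p i) i := by
      refine (sum_subset (filter_subset _ _) fun f _ hinj ↦ cb_aux ?_).symm
      simpa only [true_and, mem_filter, mem_univ] using hinj
    _ = ∑ x ∈ ((univ : Finset (Fin r → Fin q)).filter StrictMono) ×ˢ
          (univ : Finset (Equiv.Perm (Fin r))),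
        ∑ σ : Equiv.Perm (Fin r),
        ((Equiv.Perm.sign σ : ℤ) : ℝ) * ∏ i, L (σ i) ((x.1 ∘ x.2) i) * W ((x.1 ∘ x.2) i) i := by
      refine Finset.sum_nbij' (fun p => (p ∘ Tuple.sort p, (Tuple.sort p)⁻¹))
        (fun x => x.1 ∘ x.2) ?_ ?_ ?_ ?_ ?_
      · intro p hp
        have hpinj : Function.Injective p := (mem_filter.1 hp).2
        have hmono : StrictMono (p ∘ Tuple.sort p) :=
          (Tuple.monotone_sort p).strictMono_of_injective
            (hpinj.comp (Tuple.sort p).injective)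
        exact Finset.mem_product.2 ⟨mem_filter.2 ⟨mem_univ _, hmono⟩, mem_univ _⟩
      · intro x hx
        have hmono : StrictMono x.1 := (mem_filter.1 (Finset.mem_product.1 hx).1).2
        exact mem_filter.2 ⟨mem_univ _, hmono.injective.comp x.2.injective⟩
      · intro p hp
        funext j
        simp [Function.comp, Equiv.Perm.coe_inv]
      · rintro ⟨g, σ⟩ hx
        have hmono : StrictMono g := (mem_filter.1 (Finset.mem_product.1 hx).1).2
        have hpinj : Function.Injective (g ∘ σ) := hmono.injective.comp σ.injective
        have hmono' : StrictMono ((g ∘ σ) ∘ Tuple.sort (g ∘ σ)) :=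
          (Tuple.monotone_sort (g ∘ σ)).strictMono_of_injective
            (hpinj.comp (Tuple.sort (g ∘ σ)).injective)
        have hrange : Set.range ((g ∘ σ) ∘ Tuple.sort (g ∘ σ)) = Set.range g := by
          rw [(Tuple.sort (g ∘ σ)).surjective.range_comp,
            Function.Surjective.range_comp σ.surjective]
        haveI : WellFoundedLT (Fin r) := inferInstance
        have h1 : (g ∘ σ) ∘ Tuple.sort (g ∘ σ) = g := (hmono'.range_inj hmono).1 hrange
        have h2 : g ∘ ((σ : Fin r → Fin r) ∘ (Tuple.sort (g ∘ σ) : Fin r → Fin r)) = g ∘ id := by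
          rw [← Function.comp_assoc, h1, Function.comp_id]
        have h3 : (σ : Fin r → Fin r) ∘ (Tuple.sort (g ∘ σ) : Fin r → Fin r) = id :=
          hmono.injective.comp_left h2
        have h4 : σ * Tuple.sort (g ∘ σ) = 1 := Equiv.coe_fn_injective (by
          simpa [Equiv.Perm.coe_mul] using h3)
        have h5 : (Tuple.sort (g ∘ σ))⁻¹ = σ := inv_eq_of_mul_eq_one_left h4
        exact Prod.ext h1 h5
      · intro p hp
        refine Finset.sum_congr rfl fun σ _ => ?_
        have hpp : ∀ k, (p ∘ Tuple.sort p) ((Tuple.sort p)⁻¹ k) = p k := fun k => by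
          simp only [Function.comp_apply, Equiv.Perm.coe_inv, Equiv.apply_symm_apply]
        simp only [Function.comp_apply, Equiv.Perm.coe_inv, Equiv.apply_symm_apply]
    _ = ∑ g ∈ (univ : Finset (Fin r → Fin q)).filter StrictMono,
        (L.submatrix id g).det * (W.submatrix g id).det := by
      rw [Finset.sum_product]
      refine Finset.sum_congr rfl fun g hg => ?_
      exact sum_perm_det (L.submatrix id g) (W.submatrix g id)
  
end CauchyBinet

/-- `A` with all columns outside `s` replaced by zero columns. -/
def maskCols {p q : ℕ} (A : Matrix (Fin p) (Fin q) ℝ) (s : Finset (Fin q)) :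
    Matrix (Fin p) (Fin q) ℝ :=
  Matrix.of fun i j => if j ∈ s then A i j else 0

section Masks

variable {p q r : ℕ}

/-- diagonal 0/1 mask -/
def maskId (q : ℕ) (s : Finset (Fin q)) : Matrix (Fin q) (Fin q) ℝ :=
  Matrix.diagonal (fun j => if j ∈ s then (1:ℝ) else 0)

lemma maskCols_eq_mul (A : Matrix (Fin p) (Fin q) ℝ) (s : Finset (Fin q)) :
    maskCols A s = A * maskId q s := by
  ext i j
  rw [maskId, Matrix.mul_diagonal]
  simp only [maskCols, Matrix.of_apply]
  split_ifs <;> simp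

lemma maskId_transpose (s : Finset (Fin q)) : (maskId q s)ᵀ = maskId q s :=
  Matrix.diagonal_transpose _

lemma maskId_idem (s : Finset (Fin q)) : maskId q s * maskId q s = maskId q s := by
  ext i j
  rw [maskId, Matrix.diagonal_mul_diagonal]
  by_cases h : i ∈ s <;> simp [Matrix.diagonal_apply, h]

lemma image_orderEmbOfFin (s : Finset (Fin q)) (h : s.card = r) :
    Finset.image (⇑(s.orderEmbOfFin h)) univ = s := by
  apply Finset.eq_of_subset_of_card_le
  · intro j hj
    obtain ⟨k, _, rfl⟩ := Finset.mem_image.1 hj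
    exact Finset.orderEmbOfFin_mem s h k
  · rw [Finset.card_image_of_injective _ (s.orderEmbOfFin h).injective, card_univ,
      Fintype.card_fin, h]

lemma sum_over_finset (s : Finset (Fin q)) (h : s.card = r) (f : Fin q → ℝ) :
    ∑ j ∈ s, f j = ∑ k : Fin r, f (s.orderEmbOfFin h k) := by
  conv_lhs => rw [← image_orderEmbOfFin s h]
  rw [Finset.sum_image (fun x _ y _ hxy => (s.orderEmbOfFin h).injective hxy)]

lemma mul_maskId_mul {m n : ℕ} (L : Matrix (Fin m) (Fin q) ℝ) (W : Matrix (Fin q) (Fin n) ℝ)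
    (s : Finset (Fin q)) (h : s.card = r) :
    L * maskId q s * W =
      (L.submatrix id (⇑(s.orderEmbOfFin h))) * (W.submatrix (⇑(s.orderEmbOfFin h)) id) := by
  ext a b
  rw [Matrix.mul_apply, Matrix.mul_apply]
  have : ∀ j, (L * maskId q s) a j * W j b = if j ∈ s then L a j * W j b else 0 := by
    intro j
    rw [maskId, Matrix.mul_diagonal]
    split_ifs <;> simp
  simp only [this]
  rw [Finset.sum_ite_mem, Finset.univ_inter, sum_over_finset s h]
  simp

theorem cauchy_binet_finset (L : Matrix (Fin r) (Fin q) ℝ) (W : Matrix (Fin q) (Fin r) ℝ) :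
    (L * W).det = ∑ s ∈ (univ : Finset (Finset (Fin q))).filter (fun s => s.card = r),
      (L * maskId q s * W).det := by
  rw [cauchy_binet]
  refine Finset.sum_bij (fun g _ => Finset.image g univ) ?_ ?_ ?_ ?_
  · intro g hg
    have hinj := ((mem_filter.1 hg).2 : StrictMono g).injective
    rw [mem_filter]
    exact ⟨mem_univ _, by
      rw [Finset.card_image_of_injective _ hinj, card_univ, Fintype.card_fin]⟩
  · intro g1 h1 g2 h2 himg
    have r1 : Set.range g1 = Set.range g2 := by
      rw [← Set.image_univ, ← Set.image_univ, ← Finset.coe_univ, ← Finset.coe_image,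
        ← Finset.coe_image, himg]
    haveI : WellFoundedLT (Fin r) := inferInstance
    exact (((mem_filter.1 h1).2 : StrictMono g1).range_inj (mem_filter.1 h2).2).1 r1
  · intro s hs
    have h : s.card = r := (mem_filter.1 hs).2
    refine ⟨⇑(s.orderEmbOfFin h), mem_filter.2 ⟨mem_univ _, (s.orderEmbOfFin h).strictMono⟩, ?_⟩
    exact image_orderEmbOfFin s h
  · intro g hg
    have hmono : StrictMono g := (mem_filter.1 hg).2
    have h : (Finset.image g univ).card = r := by
      rw [Finset.card_image_of_injective _ hmono.injective, card_univ, Fintype.card_fin]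
    have hgeq : g = ⇑((Finset.image g univ).orderEmbOfFin h) :=
      Finset.orderEmbOfFin_unique h (fun x => Finset.mem_image_of_mem g (mem_univ x)) hmono
    rw [mul_maskId_mul L W _ h, ← hgeq, Matrix.det_mul]

end Masks

/-- `X` is a Moore-Penrose inverse of `A`. -/
def IsMoorePenrose {p q : ℕ} (A : Matrix (Fin p) (Fin q) ℝ) (X : Matrix (Fin q) (Fin p) ℝ) : Prop :=
  A * X * A = A ∧ X * A * X = X ∧ (A * X)ᵀ = A * X ∧ (X * A)ᵀ = X * A

section MP

variable {p q r : ℕ}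

lemma mp_unique {A : Matrix (Fin p) (Fin q) ℝ} {X Y : Matrix (Fin q) (Fin p) ℝ}
    (hX : IsMoorePenrose A X) (hY : IsMoorePenrose A Y) : X = Y := by
  obtain ⟨hx1, hx2, hx3, hx4⟩ := hX
  obtain ⟨hy1, hy2, hy3, hy4⟩ := hY
  have hax : A * X = A * Y := by
    calc A * X = (A * X)ᵀ := hx3.symm
      _ = ((A * Y * A) * X)ᵀ := by rw [hy1]
      _ = ((A * Y) * (A * X))ᵀ := by rw [Matrix.mul_assoc (A * Y) A X]
      _ = (A * X)ᵀ * (A * Y)ᵀ := by rw [Matrix.transpose_mul]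
      _ = (A * X) * (A * Y) := by rw [hx3, hy3]
      _ = ((A * X) * A) * Y := by rw [Matrix.mul_assoc (A * X) A Y]
      _ = A * Y := by rw [hx1]
  have hxa : X * A = Y * A := by
    calc X * A = (X * A)ᵀ := hx4.symm
      _ = (X * (A * Y * A))ᵀ := by rw [hy1]
      _ = ((X * A) * (Y * A))ᵀ := by
          rw [← Matrix.mul_assoc X (A * Y) A, ← Matrix.mul_assoc X A Y,
            Matrix.mul_assoc (X * A) Y A]
      _ = (Y * A)ᵀ * (X * A)ᵀ := by rw [Matrix.transpose_mul]
      _ = (Y * A) * (X * A) := by rw [hx4, hy4]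
      _ = Y * ((A * X) * A) := by
          rw [Matrix.mul_assoc Y A (X * A), ← Matrix.mul_assoc A X A]
      _ = Y * A := by rw [hx1]
  calc X = X * A * X := hx2.symm
    _ = X * (A * Y) := by rw [Matrix.mul_assoc, hax]
    _ = (X * A) * Y := by rw [Matrix.mul_assoc]
    _ = Y * A * Y := by rw [hxa]
    _ = Y := hy2

lemma unit_det_of_ker (B : Matrix (Fin r) (Fin r) ℝ) (h : ∀ v, B *ᵥ v = 0 → v = 0) :
    IsUnit B.det := by
  rw [isUnit_iff_ne_zero]
  intro hdet
  obtain ⟨v, hv0, hv⟩ := (Matrix.exists_mulVec_eq_zero_iff).2 hdet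
  exact hv0 (h v hv)

lemma gram_col_unit (C : Matrix (Fin p) (Fin r) ℝ) (h : ∀ v, C *ᵥ v = 0 → v = 0) :
    IsUnit (Cᵀ * C).det := by
  apply unit_det_of_ker
  intro v hv
  apply h
  have h1 : v ⬝ᵥ ((Cᵀ * C) *ᵥ v) = 0 := by rw [hv, dotProduct_zero]
  rw [← Matrix.mulVec_mulVec, Matrix.dotProduct_mulVec, Matrix.vecMul_transpose] at h1
  exact dotProduct_self_eq_zero.1 h1

lemma gram_row_unit (R : Matrix (Fin r) (Fin q) ℝ) (h : ∀ u, Rᵀ *ᵥ u = 0 → u = 0) :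
    IsUnit (R * Rᵀ).det := by
  apply unit_det_of_ker
  intro u hu
  apply h
  have h1 : u ⬝ᵥ ((R * Rᵀ) *ᵥ u) = 0 := by rw [hu, dotProduct_zero]
  rw [← Matrix.mulVec_mulVec, Matrix.dotProduct_mulVec] at h1
  have h2 : u ᵥ* R = Rᵀ *ᵥ u := by
    conv_lhs => rw [← Matrix.transpose_transpose R]
    rw [Matrix.vecMul_transpose]
  rw [h2] at h1
  exact dotProduct_self_eq_zero.1 h1

lemma mp_of_factor (C : Matrix (Fin p) (Fin r) ℝ) (R : Matrix (Fin r) (Fin q) ℝ)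
    (hC : IsUnit (Cᵀ * C).det) (hR : IsUnit (R * Rᵀ).det) :
    IsMoorePenrose (C * R) (Rᵀ * (R * Rᵀ)⁻¹ * ((Cᵀ * C)⁻¹ * Cᵀ)) := by
  set pC := (Cᵀ * C)⁻¹ * Cᵀ with hpCdef
  set pR := Rᵀ * (R * Rᵀ)⁻¹ with hpRdef
  have hpC : pC * C = 1 := by
    rw [hpCdef, Matrix.mul_assoc, Matrix.nonsing_inv_mul _ hC]
  have hpR : R * pR = 1 := by
    rw [hpRdef, ← Matrix.mul_assoc, Matrix.mul_nonsing_inv _ hR]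
  have hA1 : (C * R) * (pR * pC) = C * pC := by
    rw [Matrix.mul_assoc C R _, ← Matrix.mul_assoc R pR pC, hpR, Matrix.one_mul]
  have hA2 : (pR * pC) * (C * R) = pR * R := by
    rw [Matrix.mul_assoc pR pC _, ← Matrix.mul_assoc pC C R, hpC, Matrix.one_mul]
  have hsym1 : (C * pC)ᵀ = C * pC := by
    rw [hpCdef]
    rw [Matrix.transpose_mul, Matrix.transpose_mul, Matrix.transpose_transpose,
      Matrix.transpose_nonsing_inv, Matrix.transpose_mul, Matrix.transpose_transpose,
      ← Matrix.mul_assoc]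
  have hsym2 : (pR * R)ᵀ = pR * R := by
    rw [hpRdef]
    rw [Matrix.transpose_mul, Matrix.transpose_mul, Matrix.transpose_transpose,
      Matrix.transpose_nonsing_inv, Matrix.transpose_mul, Matrix.transpose_transpose,
      Matrix.mul_assoc]
  refine ⟨?_, ?_, ?_, ?_⟩
  · rw [hA1, Matrix.mul_assoc C pC (C * R), ← Matrix.mul_assoc pC C R, hpC, Matrix.one_mul]
  · rw [hA2, Matrix.mul_assoc pR R (pR * pC), ← Matrix.mul_assoc R pR pC, hpR,
      Matrix.one_mul]
  · rw [hA1]; exact hsym1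
  · rw [hA2]; exact hsym2

end MP

section Fact

variable {p q r : ℕ}

lemma exists_rank_fact (A : Matrix (Fin p) (Fin q) ℝ) (hr : A.rank = r) :
    ∃ (C : Matrix (Fin p) (Fin r) ℝ) (R : Matrix (Fin r) (Fin q) ℝ),
      A = C * R ∧ (∀ v, C *ᵥ v = 0 → v = 0) ∧ (∀ u, Rᵀ *ᵥ u = 0 → u = 0) := by
  classical
  have hfr : Module.finrank ℝ (LinearMap.range A.mulVecLin) = r := hr
  let b : Module.Basis (Fin r) ℝ (LinearMap.range A.mulVecLin) := Module.finBasisOfFinrankEq ℝ _ hfr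
  have hmem : ∀ j, (fun i => A i j) ∈ LinearMap.range A.mulVecLin := by
    intro j
    refine ⟨Pi.single j 1, ?_⟩
    show A *ᵥ Pi.single j 1 = _
    rw [Matrix.mulVec_single]
    funext i; simp
  refine ⟨Matrix.of fun i k => (b k : Fin p → ℝ) i,
    Matrix.of fun k j => b.repr ⟨fun i => A i j, hmem j⟩ k, ?_, ?_, ?_⟩
  · ext i j
    rw [Matrix.mul_apply]
    have hs := congrArg (fun v : LinearMap.range A.mulVecLin => (v : Fin p → ℝ) i)
      (b.sum_repr ⟨fun i => A i j, hmem j⟩)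
    simp only [AddSubmonoidClass.coe_finset_sum, SetLike.val_smul, Finset.sum_apply,
      Pi.smul_apply, smul_eq_mul] at hs
    rw [← hs]
    refine Finset.sum_congr rfl fun k _ => ?_
    simp [mul_comm]
  · intro v hv
    have h0 : (∑ k, v k • b k : LinearMap.range A.mulVecLin) = 0 := by
      apply Subtype.coe_injective
      simp only [AddSubmonoidClass.coe_finset_sum, SetLike.val_smul, ZeroMemClass.coe_zero]
      funext i
      have := congrFun hv i
      simp only [Matrix.mulVec, dotProduct, Matrix.of_apply, Pi.zero_apply] at this
      simp only [Finset.sum_apply, Pi.smul_apply, smul_eq_mul, Pi.zero_apply]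
      rw [← this]
      exact Finset.sum_congr rfl fun k _ => mul_comm _ _
    have := Fintype.linearIndependent_iff.1 b.linearIndependent v h0
    funext k; exact this k
  · intro u hu
    have hcol : ∀ j, (∑ k, u k * b.repr ⟨fun i => A i j, hmem j⟩ k) = 0 := by
      intro j
      have := congrFun hu j
      simp only [Matrix.mulVec, dotProduct, Matrix.transpose_apply, Matrix.of_apply,
        Pi.zero_apply] at this
      rw [← this]
      exact Finset.sum_congr rfl fun k _ => mul_comm _ _
    have key : ∀ x : LinearMap.range A.mulVecLin, (∑ k, u k * b.repr x k) = 0 := by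
      rintro ⟨x, w, rfl⟩
      have hxdec : (⟨A.mulVecLin w, ⟨w, rfl⟩⟩ : LinearMap.range A.mulVecLin)
          = ∑ j, w j • (⟨fun i => A i j, hmem j⟩ : LinearMap.range A.mulVecLin) := by
        apply Subtype.coe_injective
        simp only [AddSubmonoidClass.coe_finset_sum, SetLike.val_smul]
        funext i
        simp only [Matrix.mulVecLin_apply, Matrix.mulVec, dotProduct, Finset.sum_apply,
          Pi.smul_apply, smul_eq_mul]
        exact Finset.sum_congr rfl fun j _ => mul_comm _ _
      rw [hxdec, map_sum]
      have expand : ∀ k, (∑ j, b.repr (w j • ⟨fun i => A i j, hmem j⟩)) k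
          = ∑ j, w j * b.repr ⟨fun i => A i j, hmem j⟩ k := by
        intro k
        rw [Finset.sum_apply']
        exact Finset.sum_congr rfl fun j _ => by
          rw [_root_.map_smul]; simp
      simp only [expand]
      have swap : ∀ j, (∑ k, u k * (w j * b.repr ⟨fun i => A i j, hmem j⟩ k)) = 0 := by
        intro j
        have : ∀ k, u k * (w j * b.repr ⟨fun i => A i j, hmem j⟩ k)
            = w j * (u k * b.repr ⟨fun i => A i j, hmem j⟩ k) := fun k => by ring
        simp only [this, ← Finset.mul_sum, hcol j, mul_zero]
      calc (∑ k, u k * ∑ j, w j * b.repr ⟨fun i => A i j, hmem j⟩ k)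
          = ∑ k, ∑ j, u k * (w j * b.repr ⟨fun i => A i j, hmem j⟩ k) := by
            simp [Finset.mul_sum]
        _ = ∑ j, ∑ k, u k * (w j * b.repr ⟨fun i => A i j, hmem j⟩ k) := Finset.sum_comm
        _ = 0 := by simp [swap]
    funext l
    have := key (b l)
    simpa [Module.Basis.repr_self, Finsupp.single_apply] using this

end Fact

section PerS

variable {p q r : ℕ}

noncomputable def Tmat (R : Matrix (Fin r) (Fin q) ℝ) (s : Finset (Fin q)) :
    Matrix (Fin q) (Fin r) ℝ :=
  (maskCols R s)ᵀ * Matrix.adjugate ((maskCols R s) * (maskCols R s)ᵀ)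

def embM (s : Finset (Fin q)) (h : s.card = r) : Matrix (Fin q) (Fin r) ℝ :=
  Matrix.of fun j k => if j = (s.orderEmbOfFin h) k then (1:ℝ) else 0

lemma updateRow_mul_right {m n k : ℕ} (A : Matrix (Fin m) (Fin n) ℝ)
    (B : Matrix (Fin n) (Fin k) ℝ) (i : Fin m) (v : Fin n → ℝ) :
    (A.updateRow i v) * B = (A * B).updateRow i (v ᵥ* B) := by
  ext a b
  by_cases h : a = i
  · subst h
    simp [Matrix.mul_apply, Matrix.updateRow_apply, Matrix.vecMul, dotProduct]
  · simp [Matrix.mul_apply, Matrix.updateRow_apply, h]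

lemma single_vecMul_eq {n k : ℕ} (B : Matrix (Fin n) (Fin k) ℝ) (j : Fin n) :
    Pi.single j (1:ℝ) ᵥ* B = B j := by
  funext b
  simp [Matrix.vecMul, dotProduct, Pi.single_apply]

lemma updateRow_submatrix {m n k : ℕ} (B : Matrix (Fin m) (Fin n) ℝ) (i : Fin m)
    (v : Fin n → ℝ) (g : Fin k → Fin n) :
    (B.updateRow i v).submatrix id g = (B.submatrix id g).updateRow i (fun l => v (g l)) := by
  ext a b
  by_cases h : a = i <;> simp [Matrix.updateRow_apply, h]

lemma exists_emb_eq {s : Finset (Fin q)} (h : s.card = r) {j : Fin q} (hj : j ∈ s) :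
    ∃ k, (s.orderEmbOfFin h) k = j := by
  have h1 : j ∈ Set.range ⇑(s.orderEmbOfFin h) := by
    rw [Finset.range_orderEmbOfFin]; exact hj
  exact h1

lemma maskCols_transpose_eq (R : Matrix (Fin r) (Fin q) ℝ) (s : Finset (Fin q))
    (h : s.card = r) :
    (maskCols R s)ᵀ = embM s h * (R.submatrix id ⇑(s.orderEmbOfFin h))ᵀ := by
  ext j a
  rw [Matrix.mul_apply]
  simp only [embM, Matrix.of_apply, Matrix.transpose_apply, Matrix.submatrix_apply,
    id_eq, maskCols]
  by_cases hj : j ∈ s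
  · obtain ⟨k0, hk0⟩ := exists_emb_eq h hj
    rw [Finset.sum_eq_single k0]
    · simp [hj, hk0.symm]
    · intro k _ hk
      have : j ≠ (s.orderEmbOfFin h) k := by
        rw [← hk0]
        exact fun hh => hk ((s.orderEmbOfFin h).injective hh.symm)
      simp [this]
    · intro hk; exact absurd (Finset.mem_univ k0) hk
  · rw [Finset.sum_eq_zero]
    · simp [hj]
    · intro k _
      have : j ≠ (s.orderEmbOfFin h) k := fun hh => hj (hh ▸ Finset.orderEmbOfFin_mem s h k)
      simp [this]

lemma mask_mul_embM (R : Matrix (Fin r) (Fin q) ℝ) (s : Finset (Fin q)) (h : s.card = r) :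
    maskCols R s * embM s h = R.submatrix id ⇑(s.orderEmbOfFin h) := by
  ext a k
  rw [Matrix.mul_apply]
  simp only [embM, Matrix.of_apply, maskCols, Matrix.submatrix_apply, id_eq]
  rw [Finset.sum_eq_single ((s.orderEmbOfFin h) k)]
  · simp [Finset.orderEmbOfFin_mem s h k]
  · intro j _ hjk; simp [hjk]
  · intro hk; exact absurd (Finset.mem_univ _) hk

lemma maskRRt (R : Matrix (Fin r) (Fin q) ℝ) (s : Finset (Fin q)) (h : s.card = r) :
    maskCols R s * (maskCols R s)ᵀ
      = (R.submatrix id ⇑(s.orderEmbOfFin h)) * (R.submatrix id ⇑(s.orderEmbOfFin h))ᵀ := by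
  rw [maskCols_eq_mul, Matrix.transpose_mul, maskId_transpose]
  have h1 : R * maskId q s * (maskId q s * Rᵀ) = R * maskId q s * Rᵀ := by
    rw [← Matrix.mul_assoc, Matrix.mul_assoc R (maskId q s) (maskId q s), maskId_idem]
  rw [h1, mul_maskId_mul R Rᵀ s h, Matrix.transpose_submatrix]

lemma Tmat_eq (R : Matrix (Fin r) (Fin q) ℝ) (s : Finset (Fin q)) (h : s.card = r) :
    Tmat R s = (R.submatrix id ⇑(s.orderEmbOfFin h)).det •
      (embM s h * Matrix.adjugate (R.submatrix id ⇑(s.orderEmbOfFin h))) := by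
  rw [Tmat, maskRRt R s h, Matrix.adjugate_mul_distrib, maskCols_transpose_eq R s h]
  rw [Matrix.mul_assoc, ← Matrix.mul_assoc (R.submatrix id ⇑(s.orderEmbOfFin h))ᵀ,
    Matrix.mul_adjugate, Matrix.det_transpose, Matrix.smul_mul, Matrix.one_mul,
    Matrix.mul_smul]

lemma Tmat_zero (R : Matrix (Fin r) (Fin q) ℝ) (s : Finset (Fin q)) (h : s.card = r)
    (hdet : (R.submatrix id ⇑(s.orderEmbOfFin h)).det = 0) : Tmat R s = 0 := by
  rw [Tmat_eq R s h, hdet, zero_smul]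

lemma adj_entry_eq_det (R : Matrix (Fin r) (Fin q) ℝ) (j : Fin q) (i : Fin r) :
    (Rᵀ * Matrix.adjugate (R * Rᵀ)) j i
      = ((R.updateRow i (Pi.single j 1)) * Rᵀ).det := by
  rw [Matrix.mul_apply]
  have hadj : ∀ k, Matrix.adjugate (R * Rᵀ) k i
      = Matrix.cramer (R * Rᵀ)ᵀ (Pi.single k 1) i := by
    intro k; rw [Matrix.adjugate_def]; rfl
  have hv : (∑ k, R k j • (Pi.single k (1:ℝ) : Fin r → ℝ)) = fun k => R k j := by
    funext l
    rw [Finset.sum_apply]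
    simp [Pi.single_apply]
  have key : Matrix.cramer (R * Rᵀ)ᵀ (fun k => R k j) i
      = ∑ k, R k j * Matrix.cramer (R * Rᵀ)ᵀ (Pi.single k 1) i := by
    rw [← hv, map_sum, Finset.sum_apply]
    refine Finset.sum_congr rfl fun k _ => ?_
    rw [_root_.map_smul]; simp
  calc ∑ k, Rᵀ j k * Matrix.adjugate (R * Rᵀ) k i
      = ∑ k, R k j * Matrix.cramer (R * Rᵀ)ᵀ (Pi.single k 1) i :=
        Finset.sum_congr rfl fun k _ => by rw [Matrix.transpose_apply, hadj]
    _ = Matrix.cramer (R * Rᵀ)ᵀ (fun k => R k j) i := key.symm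
    _ = ((R * Rᵀ)ᵀ.updateCol i fun k => R k j).det := Matrix.cramer_apply _ _ _
    _ = (((R * Rᵀ).updateRow i fun k => R k j)ᵀ).det := by rw [Matrix.updateCol_transpose]
    _ = ((R * Rᵀ).updateRow i fun k => R k j).det := Matrix.det_transpose _
    _ = ((R.updateRow i (Pi.single j 1)) * Rᵀ).det := by
        rw [updateRow_mul_right, single_vecMul_eq]
        rfl

lemma Tmat_entry_eq_det (R : Matrix (Fin r) (Fin q) ℝ) (s : Finset (Fin q)) (h : s.card = r)
    (j : Fin q) (i : Fin r) :
    Tmat R s j i = ((R.updateRow i (Pi.single j 1)) * maskId q s * Rᵀ).det := by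
  rw [mul_maskId_mul _ _ s h, Matrix.det_mul, updateRow_submatrix, Tmat_eq R s h]
  have hdetT : (Rᵀ.submatrix (⇑(s.orderEmbOfFin h)) id).det
      = (R.submatrix id ⇑(s.orderEmbOfFin h)).det := by
    rw [← Matrix.transpose_submatrix, Matrix.det_transpose]
  rw [hdetT]
  by_cases hj : j ∈ s
  · obtain ⟨k0, hk0⟩ := exists_emb_eq h hj
    have hfun : (fun l => (Pi.single j (1:ℝ) : Fin q → ℝ) ((s.orderEmbOfFin h) l))
        = (Pi.single k0 1 : Fin r → ℝ) := by
      funext l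
      by_cases hl : l = k0
      · subst hl; rw [hk0]; simp
      · have h2 : (s.orderEmbOfFin h) l ≠ j := by
          rw [← hk0]
          exact fun hh => hl ((s.orderEmbOfFin h).injective hh)
        simp [Pi.single_apply, h2, hl]
    rw [hfun, ← Matrix.adjugate_apply]
    rw [Matrix.smul_apply, Matrix.mul_apply, smul_eq_mul]
    rw [Finset.sum_eq_single k0]
    · rw [mul_comm]
      congr 1
      simp [embM, hk0.symm]
    · intro k _ hk
      have : j ≠ (s.orderEmbOfFin h) k := by
        rw [← hk0]
        exact fun hh => hk ((s.orderEmbOfFin h).injective hh.symm)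
      simp [embM, this]
    · intro hk; exact absurd (Finset.mem_univ _) hk
  · have hzero : ∀ l, (Pi.single j (1:ℝ) : Fin q → ℝ) ((s.orderEmbOfFin h) l) = 0 := by
      intro l
      have h2 : (s.orderEmbOfFin h) l ≠ j :=
        fun hh => hj (hh ▸ Finset.orderEmbOfFin_mem s h l)
      simp [Pi.single_apply, h2]
    have hdet0 : ((R.submatrix id ⇑(s.orderEmbOfFin h)).updateRow i
        fun l => (Pi.single j (1:ℝ) : Fin q → ℝ) ((s.orderEmbOfFin h) l)).det = 0 := by
      apply Matrix.det_eq_zero_of_row_eq_zero i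
      intro l
      simp [Matrix.updateRow_self, hzero l]
    rw [hdet0, zero_mul]
    rw [Matrix.smul_apply, Matrix.mul_apply, smul_eq_mul]
    have hemb : ∀ k, embM s h j k = 0 := fun k => by
      have : j ≠ (s.orderEmbOfFin h) k := fun hh => hj (hh ▸ Finset.orderEmbOfFin_mem s h k)
      simp [embM, this]
    simp [hemb]

lemma star_identity (R : Matrix (Fin r) (Fin q) ℝ) :
    ∑ s ∈ (univ : Finset (Finset (Fin q))).filter (fun s => s.card = r), Tmat R s
      = Rᵀ * Matrix.adjugate (R * Rᵀ) := by
  ext j i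
  rw [Matrix.sum_apply]
  rw [adj_entry_eq_det R j i, cauchy_binet_finset]
  refine Finset.sum_congr rfl fun s hs => ?_
  exact Tmat_entry_eq_det R s (Finset.mem_filter.1 hs).2 j i

end PerS

open scoped Classical in
/-- The sum of squares of all `r × r` minors of a matrix. -/
noncomputable def vol2 (r : ℕ) {p q : ℕ} (B : Matrix (Fin p) (Fin q) ℝ) : ℝ :=
  ∑ f ∈ Finset.univ.filter (fun f : Fin r → Fin p => StrictMono f),
    ∑ g ∈ Finset.univ.filter (fun g : Fin r → Fin q => StrictMono g),
      ((B.submatrix f g).det) ^ 2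

section RankVol

variable {p q r : ℕ}

lemma maskCols_mul_left (C : Matrix (Fin p) (Fin r) ℝ) (R : Matrix (Fin r) (Fin q) ℝ)
    (s : Finset (Fin q)) : maskCols (C * R) s = C * maskCols R s := by
  rw [maskCols_eq_mul, maskCols_eq_mul, Matrix.mul_assoc]

lemma rank_lt_of_det_eq_zero {B : Matrix (Fin r) (Fin r) ℝ} (h : B.det = 0) (hr0 : 0 < r) :
    B.rank < r := by
  obtain ⟨v, hv0, hv⟩ := Matrix.exists_mulVec_eq_zero_iff.2 h
  have hker : LinearMap.ker B.mulVecLin ≠ ⊥ := by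
    intro hbot
    have hmem : v ∈ LinearMap.ker B.mulVecLin := by
      rw [LinearMap.mem_ker]; simpa [Matrix.mulVecLin_apply] using hv
    rw [hbot, Submodule.mem_bot] at hmem
    exact hv0 hmem
  have hsum := LinearMap.finrank_range_add_finrank_ker B.mulVecLin
  rw [Module.finrank_fin_fun] at hsum
  have hkpos : 0 < Module.finrank ℝ (LinearMap.ker B.mulVecLin) := by
    rcases Nat.eq_zero_or_pos (Module.finrank ℝ (LinearMap.ker B.mulVecLin)) with h0 | hp
    · exact absurd (Submodule.finrank_eq_zero.1 h0) hker
    · exact hp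
  have hrk : B.rank = Module.finrank ℝ (LinearMap.range B.mulVecLin) := rfl
  omega

lemma rank_mask_of_det_ne (A : Matrix (Fin p) (Fin q) ℝ) (C : Matrix (Fin p) (Fin r) ℝ)
    (R : Matrix (Fin r) (Fin q) ℝ) (hA : A = C * R) (hC : IsUnit (Cᵀ * C).det)
    (hr : A.rank = r) (s : Finset (Fin q)) (h : s.card = r)
    (hdet : (R.submatrix id ⇑(s.orderEmbOfFin h)).det ≠ 0) :
    (maskCols A s).rank = r := by
  have hCrank : C.rank = r := by
    have h1 : (Cᵀ * C).rank = C.rank := Matrix.rank_transpose_mul_self C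
    have h2 : (Cᵀ * C).rank = r := by
      rw [Matrix.rank_of_isUnit _ ((Matrix.isUnit_iff_isUnit_det _).2 hC), Fintype.card_fin]
    omega
  have hMs : IsUnit (R.submatrix id ⇑(s.orderEmbOfFin h)).det := isUnit_iff_ne_zero.2 hdet
  have hprod : maskCols A s * embM s h = C * R.submatrix id ⇑(s.orderEmbOfFin h) := by
    rw [hA, maskCols_mul_left, Matrix.mul_assoc, mask_mul_embM]
  have hge : r ≤ (maskCols A s).rank := by
    calc r = C.rank := hCrank.symm
      _ = (C * R.submatrix id ⇑(s.orderEmbOfFin h)).rank :=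
          (Matrix.rank_mul_eq_left_of_isUnit_det _ C hMs).symm
      _ = (maskCols A s * embM s h).rank := by rw [hprod]
      _ ≤ (maskCols A s).rank := Matrix.rank_mul_le_left _ _
  have hle : (maskCols A s).rank ≤ r := by
    rw [maskCols_eq_mul]
    calc (A * maskId q s).rank ≤ A.rank := Matrix.rank_mul_le_left _ _
      _ = r := hr
  omega

lemma det_ne_of_rank_mask (A : Matrix (Fin p) (Fin q) ℝ) (C : Matrix (Fin p) (Fin r) ℝ)
    (R : Matrix (Fin r) (Fin q) ℝ) (hA : A = C * R) (hr0 : 0 < r) (s : Finset (Fin q))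
    (h : s.card = r) (hrank : (maskCols A s).rank = r) :
    (R.submatrix id ⇑(s.orderEmbOfFin h)).det ≠ 0 := by
  intro hdet
  have hmask : maskCols R s = (R.submatrix id ⇑(s.orderEmbOfFin h)) * (embM s h)ᵀ := by
    calc maskCols R s = ((maskCols R s)ᵀ)ᵀ := (Matrix.transpose_transpose _).symm
      _ = (embM s h * (R.submatrix id ⇑(s.orderEmbOfFin h))ᵀ)ᵀ := by
          rw [maskCols_transpose_eq R s h]
      _ = (R.submatrix id ⇑(s.orderEmbOfFin h)) * (embM s h)ᵀ := by
          rw [Matrix.transpose_mul, Matrix.transpose_transpose]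
  have h1 : (maskCols A s).rank ≤ (R.submatrix id ⇑(s.orderEmbOfFin h)).rank := by
    rw [hA, maskCols_mul_left, hmask]
    calc (C * ((R.submatrix id ⇑(s.orderEmbOfFin h)) * (embM s h)ᵀ)).rank
        ≤ ((R.submatrix id ⇑(s.orderEmbOfFin h)) * (embM s h)ᵀ).rank :=
          Matrix.rank_mul_le_right _ _
      _ ≤ (R.submatrix id ⇑(s.orderEmbOfFin h)).rank := Matrix.rank_mul_le_left _ _
  have h2 := rank_lt_of_det_eq_zero hdet hr0
  omega

lemma sq_sum_eq_det_right (R : Matrix (Fin r) (Fin q) ℝ) :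
    ∑ g ∈ (univ : Finset (Fin r → Fin q)).filter StrictMono, (R.submatrix id g).det ^ 2
      = (R * Rᵀ).det := by
  rw [cauchy_binet R Rᵀ]
  refine Finset.sum_congr rfl fun g _ => ?_
  rw [sq]
  congr 1
  rw [← Matrix.transpose_submatrix, Matrix.det_transpose]

lemma sq_sum_eq_det_left (C : Matrix (Fin p) (Fin r) ℝ) :
    ∑ f ∈ (univ : Finset (Fin r → Fin p)).filter StrictMono, (C.submatrix f id).det ^ 2
      = (Cᵀ * C).det := by
  rw [cauchy_binet Cᵀ C]
  refine Finset.sum_congr rfl fun f _ => ?_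
  rw [sq]
  congr 1
  rw [← Matrix.transpose_submatrix, Matrix.det_transpose]

lemma vol2_factor (C : Matrix (Fin p) (Fin r) ℝ) (R : Matrix (Fin r) (Fin q) ℝ) :
    vol2 r (C * R) = (Cᵀ * C).det * (R * Rᵀ).det := by
  rw [vol2, ← sq_sum_eq_det_left C, ← sq_sum_eq_det_right R, Finset.sum_mul_sum]
  refine Finset.sum_congr rfl fun f _ => Finset.sum_congr rfl fun g _ => ?_
  rw [Matrix.submatrix_mul C R f id g Function.bijective_id, Matrix.det_mul, mul_pow]

lemma vol2_mask (C : Matrix (Fin p) (Fin r) ℝ) (R : Matrix (Fin r) (Fin q) ℝ)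
    (s : Finset (Fin q)) (h : s.card = r) :
    vol2 r (maskCols (C * R) s)
      = (Cᵀ * C).det * (R.submatrix id ⇑(s.orderEmbOfFin h)).det ^ 2 := by
  rw [vol2]
  have inner : ∀ f : Fin r → Fin p,
      (∑ g ∈ (univ : Finset (Fin r → Fin q)).filter StrictMono,
        ((maskCols (C * R) s).submatrix f g).det ^ 2)
      = ((C.submatrix f id).det) ^ 2 * ((R.submatrix id ⇑(s.orderEmbOfFin h)).det) ^ 2 := by
    intro f
    rw [Finset.sum_eq_single_of_mem (⇑(s.orderEmbOfFin h))
      (Finset.mem_filter.2 ⟨mem_univ _, (s.orderEmbOfFin h).strictMono⟩)]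
    · have hsub : (maskCols (C * R) s).submatrix f ⇑(s.orderEmbOfFin h)
          = (C.submatrix f id) * (R.submatrix id ⇑(s.orderEmbOfFin h)) := by
        ext a b
        rw [Matrix.submatrix_apply, Matrix.mul_apply]
        simp only [maskCols, Matrix.of_apply, Finset.orderEmbOfFin_mem s h b, if_true,
          Matrix.mul_apply, Matrix.submatrix_apply, id_eq]
      rw [hsub, Matrix.det_mul, mul_pow]
    · intro g hg hne
      have hmono : StrictMono g := (Finset.mem_filter.1 hg).2
      have hex : ∃ l, g l ∉ s := by
        by_contra hall
        push_neg at hall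
        have himg : Finset.image g univ = s := Finset.eq_of_subset_of_card_le
          (fun j hj => by obtain ⟨l, _, rfl⟩ := Finset.mem_image.1 hj; exact hall l)
          (le_of_eq (by rw [h, Finset.card_image_of_injective univ hmono.injective,
                card_univ, Fintype.card_fin]))
        have : g = ⇑(s.orderEmbOfFin h) := Finset.orderEmbOfFin_unique h
          (fun x => by rw [← himg]; exact Finset.mem_image_of_mem g (mem_univ x)) hmono
        exact hne this
      obtain ⟨l, hl⟩ := hex
      have hz : ((maskCols (C * R) s).submatrix f g).det = 0 :=
        Matrix.det_eq_zero_of_column_eq_zero l (fun a => by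
          simp [maskCols, Matrix.submatrix_apply, hl])
      rw [hz]
      ring
  simp only [inner]
  rw [← Finset.sum_mul, sq_sum_eq_det_left]

lemma det_smul_inv_eq_adj (B : Matrix (Fin r) (Fin r) ℝ) (hB : IsUnit B.det) :
    B.det • B⁻¹ = Matrix.adjugate B := by
  rw [Matrix.inv_def, smul_smul, Ring.mul_inverse_cancel _ hB, one_smul]

end RankVol

open scoped Classical in
theorem moore_penrose_volume_formula {p q r : ℕ} (A : Matrix (Fin p) (Fin q) ℝ)
    (hr : A.rank = r) (hr0 : 0 < r)
    (X : Matrix (Fin q) (Fin p) ℝ) (hX : IsMoorePenrose A X)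
    (Y : Finset (Fin q) → Matrix (Fin q) (Fin p) ℝ)
    (hY : ∀ s, IsMoorePenrose (maskCols A s) (Y s)) :
    X = (vol2 r A)⁻¹ •
      ∑ s ∈ Finset.univ.filter
          (fun s : Finset (Fin q) => s.card = r ∧ (maskCols A s).rank = r),
        vol2 r (maskCols A s) • Y s := by
  obtain ⟨C, R, hA, hCk, hRk⟩ := exists_rank_fact A hr
  have hC : IsUnit (Cᵀ * C).det := gram_col_unit C hCk
  have hR : IsUnit (R * Rᵀ).det := gram_row_unit R hRk
  set pC : Matrix (Fin r) (Fin p) ℝ := (Cᵀ * C)⁻¹ * Cᵀ with hpCdef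
  have hXval : X = Rᵀ * (R * Rᵀ)⁻¹ * pC := by
    refine mp_unique hX ?_
    rw [hA]
    exact mp_of_factor C R hC hR
  have E : ∀ s ∈ Finset.univ.filter
      (fun s : Finset (Fin q) => s.card = r ∧ (maskCols A s).rank = r),
      vol2 r (maskCols A s) • Y s = (Cᵀ * C).det • (Tmat R s * pC) := by
    intro s hs
    have hs1 : s.card = r := (Finset.mem_filter.1 hs).2.1
    have hs2 : (maskCols A s).rank = r := (Finset.mem_filter.1 hs).2.2
    have hdet : (R.submatrix id ⇑(s.orderEmbOfFin hs1)).det ≠ 0 :=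
      det_ne_of_rank_mask A C R hA hr0 s hs1 hs2
    have hdet2 : (maskCols R s * (maskCols R s)ᵀ).det
        = (R.submatrix id ⇑(s.orderEmbOfFin hs1)).det ^ 2 := by
      rw [maskRRt R s hs1, Matrix.det_mul, Matrix.det_transpose, sq]
    have hMsU : IsUnit (maskCols R s * (maskCols R s)ᵀ).det := by
      rw [hdet2]
      exact isUnit_iff_ne_zero.2 (pow_ne_zero 2 hdet)
    have hYs : Y s = (maskCols R s)ᵀ * (maskCols R s * (maskCols R s)ᵀ)⁻¹ * pC := by
      refine mp_unique (hY s) ?_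
      rw [hA, maskCols_mul_left]
      exact mp_of_factor C (maskCols R s) hC hMsU
    have hvol : vol2 r (maskCols A s)
        = (Cᵀ * C).det * (R.submatrix id ⇑(s.orderEmbOfFin hs1)).det ^ 2 := by
      rw [hA]
      exact vol2_mask C R s hs1
    rw [hYs, hvol, ← hdet2, mul_smul]
    congr 1
    rw [← Matrix.smul_mul, ← Matrix.mul_smul, det_smul_inv_eq_adj _ hMsU, Tmat]
  rw [Finset.sum_congr rfl E]
  have hsub : Finset.univ.filter
      (fun s : Finset (Fin q) => s.card = r ∧ (maskCols A s).rank = r)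
      ⊆ Finset.univ.filter (fun s : Finset (Fin q) => s.card = r) :=
    fun s hs => Finset.mem_filter.2 ⟨Finset.mem_univ _, (Finset.mem_filter.1 hs).2.1⟩
  have hvanish : ∀ s ∈ Finset.univ.filter (fun s : Finset (Fin q) => s.card = r),
      s ∉ Finset.univ.filter
        (fun s : Finset (Fin q) => s.card = r ∧ (maskCols A s).rank = r) →
      (Cᵀ * C).det • (Tmat R s * pC) = 0 := by
    intro s hs hns
    have hs1 : s.card = r := (Finset.mem_filter.1 hs).2
    have hdet0 : (R.submatrix id ⇑(s.orderEmbOfFin hs1)).det = 0 := by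
      by_contra hd
      exact hns (Finset.mem_filter.2 ⟨Finset.mem_univ _,
        ⟨hs1, rank_mask_of_det_ne A C R hA hC hr s hs1 hd⟩⟩)
    rw [Tmat_zero R s hs1 hdet0, Matrix.zero_mul, smul_zero]
  rw [Finset.sum_subset hsub hvanish, ← Finset.smul_sum, ← Matrix.sum_mul, star_identity R]
  have hvolA : vol2 r A = (Cᵀ * C).det * (R * Rᵀ).det := by rw [hA, vol2_factor]
  rw [hvolA, hXval, smul_smul]
  have ha : (Cᵀ * C).det ≠ 0 := isUnit_iff_ne_zero.1 hC
  have hb : (R * Rᵀ).det ≠ 0 := isUnit_iff_ne_zero.1 hR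
  have hscal : ((Cᵀ * C).det * (R * Rᵀ).det)⁻¹ * (Cᵀ * C).det = ((R * Rᵀ).det)⁻¹ := by
    field_simp
  rw [hscal, Matrix.inv_def, Ring.inverse_eq_inv', Matrix.mul_smul, Matrix.smul_mul]
end
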